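/- Let v_1, v_2, v_3 and w_1, w_2, w_3 be unit vectors in C² such that v_1, v_2, v_3 span three pairwise distinct complex lines and likewise w_1, w_2, w_3 span three pairwise distinct complex lines; write w_3 = b_1 w_1 + b_2 w_2 and v_3 = c_1 v_1 + c_2 v_2. Then: (1) there exists an invertible linear map A : C² → C² with A(span{w_1} ∪ span{w_2} ∪ span{w_3}) = span{v_1} ∪ span{v_2} ∪ span{v_3} and A w_i ∈ span{v_i} for i = 1, 2, 3; (2) there exists a linear map A : C² → C² with A w_i ∈ span{v_i} for i = 1, 2, 3 and ‖A x‖ = ‖x‖ for every x ∈ span{w_1} ∪ span{w_2} ∪ span{w_3}, if and only if |b_1| = |c_1| and |b_2| = |c_2|. -/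

import Mathlib

section Aux

variable {E : Type*} [AddCommGroup E] [Module ℂ E]

lemma li_of_span_ne {x y : E} (hx : x ≠ 0) (hy : y ≠ 0)
    (h : Submodule.span ℂ {x} ≠ Submodule.span ℂ {y}) :
    LinearIndependent ℂ ![x, y] := by
  rw [LinearIndependent.pair_iff]
  intro s t hst
  by_cases ht : t = 0
  · subst ht
    refine ⟨?_, rfl⟩
    rw [zero_smul, add_zero, smul_eq_zero] at hst
    exact hst.resolve_right hx
  · exfalso
    apply h
    have hy' : y = (-s / t) • x := by
      have h1 : t • y = (-s) • x := by
        rw [neg_smul, eq_neg_iff_add_eq_zero, add_comm]; exact hst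
      calc y = t⁻¹ • (t • y) := by rw [smul_smul, inv_mul_cancel₀ ht, one_smul]
        _ = (-s / t) • x := by rw [h1, smul_smul, ← div_eq_inv_mul]
    have hst0 : (-s / t) ≠ 0 := by
      intro h0
      apply hy
      rw [hy', h0, zero_smul]
    calc Submodule.span ℂ {x} = Submodule.span ℂ {(-s / t) • x} :=
          (Submodule.span_singleton_smul_eq (isUnit_iff_ne_zero.mpr hst0) x).symm
      _ = Submodule.span ℂ {y} := by rw [← hy']

lemma span_eq_of_smul {x z : E} (hz : z ≠ 0) {b : ℂ} (h : z = b • x) :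
    Submodule.span ℂ {x} = Submodule.span ℂ {z} := by
  have hb : b ≠ 0 := by rintro rfl; simp at h; exact hz h
  rw [h, Submodule.span_singleton_smul_eq (isUnit_iff_ne_zero.mpr hb)]

lemma img_span (f : E →ₗ[ℂ] E) (w : E) :
    f '' (Submodule.span ℂ {w} : Set E) = (Submodule.span ℂ {f w} : Set E) := by
  rw [← Submodule.map_coe, Submodule.map_span, Set.image_singleton]

end Aux

local notation "E2" => EuclideanSpace ℂ (Fin 2)

/-- Three lines in `ℂ²`: given unit vectors `v₁,v₂,v₃` and `w₁,w₂,w₃` spanning pairwise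
distinct lines, with `w₃ = b₁w₁ + b₂w₂` and `v₃ = c₁v₁ + c₂v₂`:
(1) there is an invertible linear map taking the union of the `w`-lines onto the union of
the `v`-lines with `A wᵢ ∈ span{vᵢ}`;
(2) there is a linear map with `A wᵢ ∈ span{vᵢ}` which is length preserving on the union of
the `w`-lines if and only if `|b₁| = |c₁|` and `|b₂| = |c₂|`. -/
theorem three_lines_example
    (v₁ v₂ v₃ w₁ w₂ w₃ : EuclideanSpace ℂ (Fin 2))
    (hv₁ : ‖v₁‖ = 1) (hv₂ : ‖v₂‖ = 1) (hv₃ : ‖v₃‖ = 1)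
    (hw₁ : ‖w₁‖ = 1) (hw₂ : ‖w₂‖ = 1) (hw₃ : ‖w₃‖ = 1)
    (hv12 : Submodule.span ℂ {v₁} ≠ Submodule.span ℂ {v₂})
    (hv13 : Submodule.span ℂ {v₁} ≠ Submodule.span ℂ {v₃})
    (hv23 : Submodule.span ℂ {v₂} ≠ Submodule.span ℂ {v₃})
    (hw12 : Submodule.span ℂ {w₁} ≠ Submodule.span ℂ {w₂})
    (hw13 : Submodule.span ℂ {w₁} ≠ Submodule.span ℂ {w₃})
    (hw23 : Submodule.span ℂ {w₂} ≠ Submodule.span ℂ {w₃})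
    (b₁ b₂ c₁ c₂ : ℂ)
    (hw3 : w₃ = b₁ • w₁ + b₂ • w₂) (hv3 : v₃ = c₁ • v₁ + c₂ • v₂) :
    (∃ A : EuclideanSpace ℂ (Fin 2) ≃ₗ[ℂ] EuclideanSpace ℂ (Fin 2),
      A '' ((Submodule.span ℂ {w₁} : Set (EuclideanSpace ℂ (Fin 2))) ∪
            (Submodule.span ℂ {w₂} : Set (EuclideanSpace ℂ (Fin 2))) ∪
            (Submodule.span ℂ {w₃} : Set (EuclideanSpace ℂ (Fin 2)))) =
          ((Submodule.span ℂ {v₁} : Set (EuclideanSpace ℂ (Fin 2))) ∪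
            (Submodule.span ℂ {v₂} : Set (EuclideanSpace ℂ (Fin 2))) ∪
            (Submodule.span ℂ {v₃} : Set (EuclideanSpace ℂ (Fin 2)))) ∧
      A w₁ ∈ Submodule.span ℂ {v₁} ∧ A w₂ ∈ Submodule.span ℂ {v₂} ∧
      A w₃ ∈ Submodule.span ℂ {v₃}) ∧
    ((∃ A : EuclideanSpace ℂ (Fin 2) →ₗ[ℂ] EuclideanSpace ℂ (Fin 2),
      (A w₁ ∈ Submodule.span ℂ {v₁} ∧ A w₂ ∈ Submodule.span ℂ {v₂} ∧
        A w₃ ∈ Submodule.span ℂ {v₃}) ∧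
      ∀ x ∈ ((Submodule.span ℂ {w₁} : Set (EuclideanSpace ℂ (Fin 2))) ∪
              (Submodule.span ℂ {w₂} : Set (EuclideanSpace ℂ (Fin 2))) ∪
              (Submodule.span ℂ {w₃} : Set (EuclideanSpace ℂ (Fin 2)))),
        ‖A x‖ = ‖x‖) ↔
      (‖b₁‖ = ‖c₁‖ ∧ ‖b₂‖ = ‖c₂‖)) := by
  have hv1ne : v₁ ≠ 0 := by intro h; rw [h, norm_zero] at hv₁; norm_num at hv₁
  have hv2ne : v₂ ≠ 0 := by intro h; rw [h, norm_zero] at hv₂; norm_num at hv₂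
  have hv3ne : v₃ ≠ 0 := by intro h; rw [h, norm_zero] at hv₃; norm_num at hv₃
  have hw1ne : w₁ ≠ 0 := by intro h; rw [h, norm_zero] at hw₁; norm_num at hw₁
  have hw2ne : w₂ ≠ 0 := by intro h; rw [h, norm_zero] at hw₂; norm_num at hw₂
  have hw3ne : w₃ ≠ 0 := by intro h; rw [h, norm_zero] at hw₃; norm_num at hw₃
  have hb₁ : b₁ ≠ 0 := by
    rintro rfl
    exact hw23 (span_eq_of_smul hw3ne (by simpa using hw3))
  have hb₂ : b₂ ≠ 0 := by
    rintro rfl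
    exact hw13 (span_eq_of_smul hw3ne (by simpa using hw3))
  have hc₁ : c₁ ≠ 0 := by
    rintro rfl
    exact hv23 (span_eq_of_smul hv3ne (by simpa using hv3))
  have hc₂ : c₂ ≠ 0 := by
    rintro rfl
    exact hv13 (span_eq_of_smul hv3ne (by simpa using hv3))
  have hliw : LinearIndependent ℂ ![w₁, w₂] := li_of_span_ne hw1ne hw2ne hw12
  have hliv : LinearIndependent ℂ ![v₁, v₂] := li_of_span_ne hv1ne hv2ne hv12
  set u₁ : ℂ := c₁ / b₁ with hu₁def
  set u₂ : ℂ := c₂ / b₂ with hu₂def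
  have hu₁ : u₁ ≠ 0 := div_ne_zero hc₁ hb₁
  have hu₂ : u₂ ≠ 0 := div_ne_zero hc₂ hb₂
  have hliv' : LinearIndependent ℂ ![u₁ • v₁, u₂ • v₂] := by
    rw [LinearIndependent.pair_iff]
    intro s t hst
    rw [smul_smul, smul_smul] at hst
    obtain ⟨h1, h2⟩ := LinearIndependent.pair_iff.mp hliv _ _ hst
    exact ⟨by simpa [hu₁] using h1, by simpa [hu₂] using h2⟩
  have hcard : Fintype.card (Fin 2) = Module.finrank ℂ E2 := by
    simp
  let bw := basisOfLinearIndependentOfCardEqFinrank hliw hcard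
  let bv := basisOfLinearIndependentOfCardEqFinrank hliv' hcard
  let A : E2 ≃ₗ[ℂ] E2 := bw.equiv bv (Equiv.refl _)
  have hbw0 : bw 0 = w₁ := by
    rw [show ⇑bw = ![w₁, w₂] from coe_basisOfLinearIndependentOfCardEqFinrank hliw hcard]; rfl
  have hbw1 : bw 1 = w₂ := by
    rw [show ⇑bw = ![w₁, w₂] from coe_basisOfLinearIndependentOfCardEqFinrank hliw hcard]; rfl
  have hbv0 : bv 0 = u₁ • v₁ := by
    rw [show ⇑bv = ![u₁ • v₁, u₂ • v₂] from
      coe_basisOfLinearIndependentOfCardEqFinrank hliv' hcard]; rfl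
  have hbv1 : bv 1 = u₂ • v₂ := by
    rw [show ⇑bv = ![u₁ • v₁, u₂ • v₂] from
      coe_basisOfLinearIndependentOfCardEqFinrank hliv' hcard]; rfl
  have hA1 : A w₁ = u₁ • v₁ := by
    rw [← hbw0, ← hbv0]; exact bw.equiv_apply 0 bv (Equiv.refl _)
  have hA2 : A w₂ = u₂ • v₂ := by
    rw [← hbw1, ← hbv1]; exact bw.equiv_apply 1 bv (Equiv.refl _)
  have hb1u1 : b₁ * u₁ = c₁ := by rw [hu₁def]; field_simp
  have hb2u2 : b₂ * u₂ = c₂ := by rw [hu₂def]; field_simp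
  have hA3 : A w₃ = v₃ := by
    rw [hw3, map_add, map_smul, map_smul, hA1, hA2, hv3, smul_smul, smul_smul,
      hb1u1, hb2u2]
  -- norm facts
  have habsu₁ : ‖b₁‖ = ‖c₁‖ → ‖u₁‖ = 1 := by
    intro h
    have : ‖u₁‖ = 1 := by
      rw [hu₁def, norm_div, h, div_self]
      simpa using hc₁
    simpa using this
  have habsu₂ : ‖b₂‖ = ‖c₂‖ → ‖u₂‖ = 1 := by
    intro h
    have : ‖u₂‖ = 1 := by
      rw [hu₂def, norm_div, h, div_self]
      simpa using hc₂
    simpa using this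
  constructor
  · -- part (1)
    refine ⟨A, ?_, ?_, ?_, ?_⟩
    · rw [Set.image_union, Set.image_union]
      have e1 : ⇑A '' (Submodule.span ℂ {w₁} : Set E2) = (Submodule.span ℂ {v₁} : Set E2) := by
        rw [show ⇑A = ⇑(A : E2 →ₗ[ℂ] E2) from rfl, img_span]
        congr 1
        rw [show (A : E2 →ₗ[ℂ] E2) w₁ = A w₁ from rfl, hA1,
          Submodule.span_singleton_smul_eq (isUnit_iff_ne_zero.mpr hu₁)]
      have e2 : ⇑A '' (Submodule.span ℂ {w₂} : Set E2) = (Submodule.span ℂ {v₂} : Set E2) := by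
        rw [show ⇑A = ⇑(A : E2 →ₗ[ℂ] E2) from rfl, img_span]
        congr 1
        rw [show (A : E2 →ₗ[ℂ] E2) w₂ = A w₂ from rfl, hA2,
          Submodule.span_singleton_smul_eq (isUnit_iff_ne_zero.mpr hu₂)]
      have e3 : ⇑A '' (Submodule.span ℂ {w₃} : Set E2) = (Submodule.span ℂ {v₃} : Set E2) := by
        rw [show ⇑A = ⇑(A : E2 →ₗ[ℂ] E2) from rfl, img_span]
        congr 1
        rw [show (A : E2 →ₗ[ℂ] E2) w₃ = A w₃ from rfl, hA3]
      rw [e1, e2, e3]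
    · rw [hA1]; exact Submodule.smul_mem _ _ (Submodule.mem_span_singleton_self v₁)
    · rw [hA2]; exact Submodule.smul_mem _ _ (Submodule.mem_span_singleton_self v₂)
    · rw [hA3]; exact Submodule.mem_span_singleton_self v₃
  · -- part (2)
    constructor
    · -- forward
      rintro ⟨B, ⟨hB1, hB2, hB3⟩, hBnorm⟩
      obtain ⟨μ₁, hμ₁⟩ := Submodule.mem_span_singleton.mp hB1
      obtain ⟨μ₂, hμ₂⟩ := Submodule.mem_span_singleton.mp hB2
      obtain ⟨μ₃, hμ₃⟩ := Submodule.mem_span_singleton.mp hB3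
      have hm1 : w₁ ∈ ((Submodule.span ℂ {w₁} : Set E2) ∪ (Submodule.span ℂ {w₂} : Set E2) ∪
          (Submodule.span ℂ {w₃} : Set E2)) :=
        Or.inl (Or.inl (Submodule.mem_span_singleton_self w₁))
      have hm2 : w₂ ∈ ((Submodule.span ℂ {w₁} : Set E2) ∪ (Submodule.span ℂ {w₂} : Set E2) ∪
          (Submodule.span ℂ {w₃} : Set E2)) :=
        Or.inl (Or.inr (Submodule.mem_span_singleton_self w₂))
      have hm3 : w₃ ∈ ((Submodule.span ℂ {w₁} : Set E2) ∪ (Submodule.span ℂ {w₂} : Set E2) ∪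
          (Submodule.span ℂ {w₃} : Set E2)) :=
        Or.inr (Submodule.mem_span_singleton_self w₃)
      have habs1 : ‖μ₁‖ = 1 := by
        have := hBnorm w₁ hm1
        rw [← hμ₁, norm_smul, hv₁, hw₁, mul_one] at this
        simpa using this
      have habs2 : ‖μ₂‖ = 1 := by
        have := hBnorm w₂ hm2
        rw [← hμ₂, norm_smul, hv₂, hw₂, mul_one] at this
        simpa using this
      have habs3 : ‖μ₃‖ = 1 := by
        have := hBnorm w₃ hm3
        rw [← hμ₃, norm_smul, hv₃, hw₃, mul_one] at this
        simpa using this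
      have heq : (μ₃ * c₁) • v₁ + (μ₃ * c₂) • v₂ = (b₁ * μ₁) • v₁ + (b₂ * μ₂) • v₂ := by
        have h1 : B w₃ = b₁ • B w₁ + b₂ • B w₂ := by
          rw [hw3, map_add, map_smul, map_smul]
        rw [← hμ₁, ← hμ₂, ← hμ₃, hv3, smul_add] at h1
        rw [smul_smul, smul_smul] at h1
        rw [← smul_smul, ← smul_smul] at h1
        rw [smul_smul, smul_smul, smul_smul, smul_smul] at h1
        exact h1
      have heq0 : (b₁ * μ₁ - μ₃ * c₁) • v₁ + (b₂ * μ₂ - μ₃ * c₂) • v₂ = 0 := by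
        rw [sub_smul, sub_smul, sub_add_sub_comm, sub_eq_zero]
        exact heq.symm
      obtain ⟨e1, e2⟩ := LinearIndependent.pair_iff.mp hliv _ _ heq0
      rw [sub_eq_zero] at e1 e2
      constructor
      · have := congrArg (‖·‖) e1
        rwa [norm_mul, norm_mul, habs1, habs3, mul_one, one_mul] at this
      · have := congrArg (‖·‖) e2
        rwa [norm_mul, norm_mul, habs2, habs3, mul_one, one_mul] at this
    · -- backward
      rintro ⟨hab1, hab2⟩
      refine ⟨(A : E2 →ₗ[ℂ] E2), ⟨?_, ?_, ?_⟩, ?_⟩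
      · rw [show (A : E2 →ₗ[ℂ] E2) w₁ = A w₁ from rfl, hA1]
        exact Submodule.smul_mem _ _ (Submodule.mem_span_singleton_self v₁)
      · rw [show (A : E2 →ₗ[ℂ] E2) w₂ = A w₂ from rfl, hA2]
        exact Submodule.smul_mem _ _ (Submodule.mem_span_singleton_self v₂)
      · rw [show (A : E2 →ₗ[ℂ] E2) w₃ = A w₃ from rfl, hA3]
        exact Submodule.mem_span_singleton_self v₃
      · intro x hx
        simp only [Set.mem_union, SetLike.mem_coe] at hx
        rcases hx with (hx | hx) | hx <;>
          obtain ⟨t, ht⟩ := Submodule.mem_span_singleton.mp hx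
        · rw [← ht, map_smul, show (A : E2 →ₗ[ℂ] E2) w₁ = A w₁ from rfl, hA1,
            norm_smul, norm_smul, norm_smul, habsu₁ hab1, hv₁, hw₁]; ring
        · rw [← ht, map_smul, show (A : E2 →ₗ[ℂ] E2) w₂ = A w₂ from rfl, hA2,
            norm_smul, norm_smul, norm_smul, habsu₂ hab2, hv₂, hw₂]; ring
        · rw [← ht, map_smul, show (A : E2 →ₗ[ℂ] E2) w₃ = A w₃ from rfl, hA3,
            norm_smul, norm_smul, hv₃, hw₃]
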